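/- arXiv:math/0405342 — 3 statements merged into one kernel-verified Lean document; each statement's English description precedes it below -/
import Mathlib

section
/- For every real u with −1 ≤ u ≤ 1 and every real v ≥ 0, one has u·v ≤ u²·1{u > 0} + ψ₁(v), where 1{u > 0} equals 1 if u > 0 and 0 otherwise. -/
/-- The function `ψ₁`: `ψ₁(v) = v²/4` for `v ≤ 2` and `ψ₁(v) = v − 1` for `v ≥ 2`. -/
noncomputable def psiOne (v : ℝ) : ℝ := if v ≤ 2 then v ^ 2 / 4 else v - 1

/-- inequality (7) of the paper. For every `u ∈ [−1,1]` and `v ≥ 0`,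
`u·v ≤ u²·1{u > 0} + ψ₁(v)`. -/
theorem stmt6 (u v : ℝ) (hu1 : -1 ≤ u) (hu2 : u ≤ 1) (hv : 0 ≤ v) :
    u * v ≤ u ^ 2 * (if 0 < u then (1:ℝ) else 0) + psiOne v := by
  unfold psiOne
  split_ifs with h1 h2 h3 <;> nlinarith [sq_nonneg (u - v/2), sq_nonneg u, sq_nonneg v, mul_nonneg (sub_nonneg.2 hu2) hv, sq_nonneg (u-1), sq_nonneg (u+1), mul_nonneg hv hv]
end

section
/- Let (Ω, P) be a probability space and f : Ω → [0,1] measurable. Define h(c) = ∫ (f(y) − c)² 1{f(y) > c} dP(y) for c ∈ [0,1]. Then h is nonincreasing and convex on [0,1], h(0) = P f² and h(1) = 0, and consequently for any c₁, …, c_n ∈ [0,1], (1/n) Σ_{i=1}^n h(c_i) ≤ (1 − c̄) P f², where c̄ = (1/n) Σ_{i=1}^n c_i. -/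
open MeasureTheory Set

/-- properties of `h(c) = ∫ (f − c)² 1{f > c} dP` from the proof of Theorem 2
of the paper. For a probability space `(Ω,P)` and measurable `f : Ω → [0,1]`, the function
`h` is nonincreasing and convex on `[0,1]`, `h(0) = P f²`, `h(1) = 0`, and consequently for
`c₁, …, c_n ∈ [0,1]`, `(1/n) Σ h(c_i) ≤ (1 − c̄) P f²` with `c̄ = (1/n) Σ c_i`. -/
theorem stmt7 {Ω : Type*} [MeasurableSpace Ω] (P : Measure Ω) [IsProbabilityMeasure P]
    (f : Ω → ℝ) (hf : Measurable f) (hf01 : ∀ ω, f ω ∈ Set.Icc (0:ℝ) 1) :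
    AntitoneOn (fun c : ℝ => ∫ y, (if c < f y then (f y - c) ^ 2 else 0) ∂P) (Set.Icc 0 1) ∧
    ConvexOn ℝ (Set.Icc 0 1) (fun c : ℝ => ∫ y, (if c < f y then (f y - c) ^ 2 else 0) ∂P) ∧
    (∫ y, (if (0:ℝ) < f y then (f y - 0) ^ 2 else 0) ∂P) = ∫ y, (f y) ^ 2 ∂P ∧
    (∫ y, (if (1:ℝ) < f y then (f y - 1) ^ 2 else 0) ∂P) = 0 ∧
    (∀ (n : ℕ), 1 ≤ n → ∀ c : Fin n → ℝ, (∀ i, c i ∈ Set.Icc (0:ℝ) 1) →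
      (1 / (n : ℝ)) * ∑ i, ∫ y, (if c i < f y then (f y - c i) ^ 2 else 0) ∂P ≤
        (1 - (1 / (n : ℝ)) * ∑ i, c i) * ∫ y, (f y) ^ 2 ∂P) := by
  set g : ℝ → Ω → ℝ := fun c y => if c < f y then (f y - c) ^ 2 else 0 with hg
  have hgnn : ∀ c y, 0 ≤ g c y := by
    intro c y; simp only [g]; split <;> positivity
  have hgle1 : ∀ c y, g c y ≤ (1 - c) ^ 2 := by
    intro c y; simp only [g]; split
    · have h1 := (hf01 y).2
      have h2 := (hf01 y).1
      nlinarith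
    · positivity
  have hmeas : ∀ c, AEStronglyMeasurable (g c) P := by
    intro c
    exact (Measurable.ite (measurableSet_lt measurable_const hf)
      ((hf.sub measurable_const).pow_const 2) measurable_const).aestronglyMeasurable
  have hint : ∀ c, Integrable (g c) P := by
    intro c
    refine Integrable.mono' (integrable_const ((1 - c) ^ 2)) (hmeas c) ?_
    filter_upwards with y
    rw [Real.norm_eq_abs, abs_of_nonneg (hgnn c y)]
    exact hgle1 c y
  have hint2 : Integrable (fun y => f y ^ 2) P := by
    refine Integrable.mono' (integrable_const 1) ((hf.pow_const 2).aestronglyMeasurable) ?_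
    filter_upwards with y
    have h1 := (hf01 y).1; have h2 := (hf01 y).2
    rw [Real.norm_eq_abs, abs_of_nonneg (by positivity)]
    nlinarith
  have hrep : ∀ c y, g c y = (max (f y - c) 0) ^ 2 := by
    intro c y; simp only [g]
    by_cases h : c < f y
    · rw [if_pos h, max_eq_left (by linarith)]
    · push_neg at h
      rw [if_neg (not_lt.mpr h), max_eq_right (by linarith)]
      simp
  -- pointwise antitone
  have hanti_pt : ∀ y, ∀ a b : ℝ, a ≤ b → g b y ≤ g a y := by
    intro y a b hab
    rw [hrep, hrep]
    have : max (f y - b) 0 ≤ max (f y - a) 0 :=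
      max_le_max (by linarith) le_rfl
    have h0 : (0:ℝ) ≤ max (f y - b) 0 := le_max_right _ _
    nlinarith
  -- pointwise convexity
  have hcvx_pt : ∀ y, ∀ a b s t : ℝ, 0 ≤ s → 0 ≤ t → s + t = 1 →
      g (s * a + t * b) y ≤ s * g a y + t * g b y := by
    intro y a b s t hs ht hst
    rw [hrep, hrep, hrep]
    set Ma := max (f y - a) 0 with hMa
    set Mb := max (f y - b) 0 with hMb
    have hMa0 : 0 ≤ Ma := le_max_right _ _
    have hMb0 : 0 ≤ Mb := le_max_right _ _
    have hMale : f y - a ≤ Ma := le_max_left _ _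
    have hMble : f y - b ≤ Mb := le_max_left _ _
    have hM : max (f y - (s * a + t * b)) 0 ≤ s * Ma + t * Mb := by
      refine max_le ?_ (by positivity)
      have : f y - (s * a + t * b) = s * (f y - a) + t * (f y - b) := by
        linear_combination (-(f y)) * hst
      rw [this]
      gcongr
    have hM0 : (0:ℝ) ≤ max (f y - (s * a + t * b)) 0 := le_max_right _ _
    nlinarith [sq_nonneg (Ma - Mb), mul_nonneg hs ht]
  -- key pointwise bound
  have hkey : ∀ c : ℝ, c ∈ Icc (0:ℝ) 1 → ∀ y, g c y ≤ (1 - c) * f y ^ 2 := by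
    intro c hc y
    obtain ⟨hc0, hc1⟩ := hc
    simp only [g]
    have h1 := (hf01 y).1; have h2 := (hf01 y).2
    split
    · rename_i h
      nlinarith [mul_nonneg hc0 (by linarith : (0:ℝ) ≤ f y - c),
        mul_nonneg hc0 (mul_nonneg h1 (by linarith : (0:ℝ) ≤ 1 - f y))]
    · rename_i h
      push_neg at h
      nlinarith [mul_nonneg (by linarith : (0:ℝ) ≤ 1 - c) (sq_nonneg (f y))]
  have hA0 : 0 ≤ ∫ y, f y ^ 2 ∂P := integral_nonneg fun y => by positivity
  refine ⟨?_, ?_, ?_, ?_, ?_⟩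
  · intro a _ b _ hab
    exact integral_mono (hint b) (hint a) fun y => hanti_pt y a b hab
  · refine ⟨convex_Icc 0 1, ?_⟩
    intro a _ b _ s t hs ht hst
    simp only [smul_eq_mul]
    calc ∫ y, g (s * a + t * b) y ∂P ≤ ∫ y, (s * g a y + t * g b y) ∂P := by
          refine integral_mono (hint _) (((hint a).const_mul s).add ((hint b).const_mul t)) ?_
          intro y; exact hcvx_pt y a b s t hs ht hst
      _ = s * ∫ y, g a y ∂P + t * ∫ y, g b y ∂P := by
          rw [integral_add ((hint a).const_mul s) ((hint b).const_mul t),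
            integral_const_mul, integral_const_mul]
  · refine integral_congr_ae (Filter.Eventually.of_forall fun y => ?_)
    have h1 := (hf01 y).1
    by_cases h : (0:ℝ) < f y
    · simp [h]
    · push_neg at h
      have : f y = 0 := le_antisymm h h1
      simp [this]
  · have : ∀ y, (if (1:ℝ) < f y then (f y - 1) ^ 2 else 0) = 0 := by
      intro y
      rw [if_neg (not_lt.mpr (hf01 y).2)]
    simp only [this, integral_zero]
  · intro n hn c hc
    have hn' : (n : ℝ) ≠ 0 := Nat.cast_ne_zero.mpr (by omega)
    have heach : ∀ i, ∫ y, g (c i) y ∂P ≤ (1 - c i) * ∫ y, f y ^ 2 ∂P := by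
      intro i
      rw [← integral_const_mul]
      exact integral_mono (hint _) (hint2.const_mul _) (hkey (c i) (hc i))
    have hsum : ∑ i, ∫ y, g (c i) y ∂P ≤ ∑ i, (1 - c i) * ∫ y, f y ^ 2 ∂P :=
      Finset.sum_le_sum fun i _ => heach i
    have hrhs : ∑ i, (1 - c i) * ∫ y, f y ^ 2 ∂P
        = ((n : ℝ) - ∑ i, c i) * ∫ y, f y ^ 2 ∂P := by
      rw [← Finset.sum_mul]
      congr 1
      rw [Finset.sum_sub_distrib, Finset.sum_const, Finset.card_univ, Fintype.card_fin]
      simp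
    have h1n : (0:ℝ) ≤ 1 / (n : ℝ) := by positivity
    calc (1 / (n : ℝ)) * ∑ i, ∫ y, g (c i) y ∂P
        ≤ (1 / (n : ℝ)) * (((n : ℝ) - ∑ i, c i) * ∫ y, f y ^ 2 ∂P) := by
          rw [← hrhs]; exact mul_le_mul_of_nonneg_left hsum h1n
      _ = (1 - (1 / (n : ℝ)) * ∑ i, c i) * ∫ y, f y ^ 2 ∂P := by
          field_simp
end

section
/- Assume D(F,1) ≥ 2, D(F,·) is nonincreasing with finite entropy integral, and Pf > 0 for all f ∈ F. Then for every u > 0, Pⁿ( sup_{f∈F} Σ_{i=1}^n (Pf − f(x_i)) / φ(Pf) ≥ u ) ≤ 2 · (Pⁿ ⊗ Pⁿ)( sup_{f∈F} Σ_{i=1}^n (f(y_i) − f(x_i)) / φ(f̄(x,y)) ≥ u − √(2/log 2) ), where f̄(x,y) = (1/(2n)) Σ_{i=1}^n ( f(y_i) + f(x_i) ). -/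
open MeasureTheory ProbabilityTheory Real Set
open scoped ENNReal NNReal

noncomputable def Gfun (D : ℝ → ℝ) : ℝ → ℝ :=
  fun t => ∫ v in Set.Ioc (0:ℝ) t, Real.sqrt (Real.log (D v))

section Gsec
variable {D : ℝ → ℝ}

lemma Gfun_nonneg (t : ℝ) : 0 ≤ Gfun D t :=
  setIntegral_nonneg measurableSet_Ioc (fun v _ => Real.sqrt_nonneg _)

lemma Gfun_intOn (hint : IntegrableOn (fun v => Real.sqrt (Real.log (D v))) (Set.Ioi 0))
    (t : ℝ) : IntegrableOn (fun v => Real.sqrt (Real.log (D v))) (Set.Ioc 0 t) :=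
  hint.mono_set Set.Ioc_subset_Ioi_self

lemma Gfun_mono (hint : IntegrableOn (fun v => Real.sqrt (Real.log (D v))) (Set.Ioi 0)) :
    Monotone (Gfun D) := by
  intro a b hab
  refine setIntegral_mono_set (Gfun_intOn hint b)
    (Filter.Eventually.of_forall fun v => Real.sqrt_nonneg _) ?_
  exact HasSubset.Subset.eventuallyLE (Set.Ioc_subset_Ioc_right hab)

lemma Gfun_measurable (hint : IntegrableOn (fun v => Real.sqrt (Real.log (D v))) (Set.Ioi 0)) :
    Measurable (Gfun D) := (Gfun_mono hint).measurable

lemma Gfun_lb (hmono : AntitoneOn D (Set.Ioi 0)) (hD2 : 2 ≤ D 1)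
    (hint : IntegrableOn (fun v => Real.sqrt (Real.log (D v))) (Set.Ioi 0))
    {t : ℝ} (ht0 : 0 ≤ t) (ht1 : t ≤ 1) :
    t * Real.sqrt (Real.log 2) ≤ Gfun D t := by
  have hpt : ∀ v ∈ Set.Ioc (0:ℝ) t, Real.sqrt (Real.log 2) ≤ Real.sqrt (Real.log (D v)) := by
    intro v hv
    have hv0 : (0:ℝ) < v := hv.1
    have hD : D 1 ≤ D v := hmono hv0 (by norm_num) (hv.2.trans ht1)
    have h2 : (2:ℝ) ≤ D v := hD2.trans hD
    exact Real.sqrt_le_sqrt (Real.log_le_log two_pos h2)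
  calc t * Real.sqrt (Real.log 2)
      = ∫ _ in Set.Ioc (0:ℝ) t, Real.sqrt (Real.log 2) := by
        rw [setIntegral_const]
        simp [Real.volume_Ioc, ENNReal.toReal_ofReal ht0, ht0]
    _ ≤ ∫ v in Set.Ioc (0:ℝ) t, Real.sqrt (Real.log (D v)) :=
        setIntegral_mono_on (integrableOn_const (by simp [Real.volume_Ioc]))
          (Gfun_intOn hint t) measurableSet_Ioc hpt
    _ = Gfun D t := rfl

end Gsec

section MV
variable {Ω : Type*} [MeasurableSpace Ω] (P : Measure Ω) [IsProbabilityMeasure P] {n : ℕ}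
variable {F : Ω → ℝ} (hFm : Measurable F) (hFr : ∀ ω, F ω ∈ Set.Icc (0:ℝ) 1)

lemma aux_pi_prod'  (f : Fin n → Ω → ℝ) :
    ∫ x : Fin n → Ω, ∏ j, f j (x j) ∂(Measure.pi fun _ => P) = ∏ j, ∫ ω, f j ω ∂P := by
  letI : MeasureSpace Ω := ⟨P⟩
  haveI : SigmaFinite (volume : Measure Ω) := inferInstanceAs (SigmaFinite P)
  exact MeasureTheory.integral_fintype_prod_eq_prod f
lemma aux_pi_one (j : Fin n) (d : Ω → ℝ) :
    ∫ x : Fin n → Ω, d (x j) ∂(Measure.pi fun _ => P) = ∫ ω, d ω ∂P := by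
  classical
  have h1 : ∀ x : Fin n → Ω, ∏ l, (if l = j then d else fun _ => (1:ℝ)) (x l) = d (x j) := by
    intro x
    rw [Finset.prod_eq_single j (fun b _ hb => by simp [hb]) (fun h => absurd (Finset.mem_univ j) h)]
    simp
  have h2 : ∏ l, ∫ ω, (if l = j then d else fun _ => (1:ℝ)) ω ∂P = ∫ ω, d ω ∂P := by
    rw [Finset.prod_eq_single j (fun b _ hb => by simp [hb]) (fun h => absurd (Finset.mem_univ j) h)]
    simp
  calc ∫ x : Fin n → Ω, d (x j) ∂(Measure.pi fun _ => P)
      = ∫ x : Fin n → Ω, ∏ l, (if l = j then d else fun _ => (1:ℝ)) (x l)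
          ∂(Measure.pi fun _ => P) := by
        refine integral_congr_ae (Filter.Eventually.of_forall fun x => (h1 x).symm)
    _ = ∏ l, ∫ ω, (if l = j then d else fun _ => (1:ℝ)) ω ∂P := aux_pi_prod' P _
    _ = ∫ ω, d ω ∂P := h2

lemma aux_pi_two {j k : Fin n} (hjk : j ≠ k) (d : Ω → ℝ) :
    ∫ x : Fin n → Ω, d (x j) * d (x k) ∂(Measure.pi fun _ => P)
      = (∫ ω, d ω ∂P) * (∫ ω, d ω ∂P) := by
  classical
  set f : Fin n → Ω → ℝ := fun l => if l = j then d else if l = k then d else fun _ => (1:ℝ)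
    with hf
  have hkj : k ≠ j := hjk.symm
  have h1 : ∀ x : Fin n → Ω, ∏ l, f l (x l) = d (x j) * d (x k) := by
    intro x
    rw [← Finset.mul_prod_erase Finset.univ (fun l => f l (x l)) (Finset.mem_univ j),
      ← Finset.mul_prod_erase ((Finset.univ).erase j) (fun l => f l (x l))
        (Finset.mem_erase.mpr ⟨hkj, Finset.mem_univ k⟩)]
    have hrest : ∏ l ∈ ((Finset.univ).erase j).erase k, f l (x l) = 1 := by
      refine Finset.prod_eq_one fun l hl => ?_
      have hlk : l ≠ k := (Finset.mem_erase.mp hl).1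
      have hlj : l ≠ j := (Finset.mem_erase.mp (Finset.mem_erase.mp hl).2).1
      simp [hf, hlk, hlj]
    rw [hrest]
    simp [hf, hkj]
  have h2 : ∏ l, ∫ ω, f l ω ∂P = (∫ ω, d ω ∂P) * (∫ ω, d ω ∂P) := by
    rw [← Finset.mul_prod_erase Finset.univ (fun l => ∫ ω, f l ω ∂P) (Finset.mem_univ j),
      ← Finset.mul_prod_erase ((Finset.univ).erase j) (fun l => ∫ ω, f l ω ∂P)
        (Finset.mem_erase.mpr ⟨hkj, Finset.mem_univ k⟩)]
    have hrest : ∏ l ∈ ((Finset.univ).erase j).erase k, ∫ ω, f l ω ∂P = 1 := by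
      refine Finset.prod_eq_one fun l hl => ?_
      have hlk : l ≠ k := (Finset.mem_erase.mp hl).1
      have hlj : l ≠ j := (Finset.mem_erase.mp (Finset.mem_erase.mp hl).2).1
      simp [hf, hlk, hlj]
    rw [hrest]
    simp [hf, hkj]
  calc ∫ x : Fin n → Ω, d (x j) * d (x k) ∂(Measure.pi fun _ => P)
      = ∫ x : Fin n → Ω, ∏ l, f l (x l) ∂(Measure.pi fun _ => P) :=
        integral_congr_ae (Filter.Eventually.of_forall fun x => (h1 x).symm)
    _ = ∏ l, ∫ ω, f l ω ∂P := aux_pi_prod' P _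
    _ = _ := h2


include hFm hFr in
lemma aux_int_1 : Integrable F P := by
  refine (integrable_const (1:ℝ)).mono' hFm.aestronglyMeasurable ?_
  exact Filter.Eventually.of_forall fun ω => by
    rw [Real.norm_eq_abs, abs_of_nonneg (hFr ω).1]; exact (hFr ω).2

include hFm hFr in
lemma aux_m_le_one : ∫ ω, F ω ∂P ≤ 1 := by
  calc ∫ ω, F ω ∂P ≤ ∫ _, (1:ℝ) ∂P :=
        integral_mono (aux_int_1 P hFm hFr) (integrable_const 1) (fun ω => (hFr ω).2)
    _ = 1 := by simp

include hFm hFr in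
lemma aux_mean :
    ∫ x : Fin n → Ω, (∑ j, F (x j)) ∂(Measure.pi fun _ => P) = n * ∫ ω, F ω ∂P := by
  rw [integral_finset_sum]
  · simp [aux_pi_one P _ F, Finset.card_univ]
  · intro j _
    refine (integrable_const (1:ℝ)).mono'
      (hFm.comp (measurable_pi_apply j)).aestronglyMeasurable ?_
    exact Filter.Eventually.of_forall fun x => by
      rw [Real.norm_eq_abs, abs_of_nonneg (hFr _).1]; exact (hFr _).2

include hFm hFr in
lemma aux_var :
    ∫ x : Fin n → Ω, (∑ j, F (x j) - n * ∫ ω, F ω ∂P) ^ 2 ∂(Measure.pi fun _ => P)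
      ≤ n * ∫ ω, F ω ∂P := by
  set m : ℝ := ∫ ω, F ω ∂P with hm
  set d : Ω → ℝ := fun ω => F ω - m with hd
  have hdm : Measurable d := hFm.sub measurable_const
  have hm0 : 0 ≤ m := integral_nonneg fun ω => (hFr ω).1
  have hm1 : m ≤ 1 := aux_m_le_one P hFm hFr
  have hdb : ∀ ω, |d ω| ≤ 1 := by
    intro ω
    rw [abs_le]
    constructor
    · have := (hFr ω).1; simp only [hd]; linarith
    · have := (hFr ω).2; simp only [hd]; linarith
  have hdint : ∫ ω, d ω ∂P = 0 := by
    rw [hd]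
    rw [integral_sub (aux_int_1 P hFm hFr) (integrable_const m)]
    simp [hm]
  have hsq : ∫ ω, d ω * d ω ∂P ≤ m := by
    have hps : ∀ ω, d ω * d ω ≤ F ω - 2 * m * F ω + m ^ 2 := by
      intro ω
      have h1 := (hFr ω).1
      have h2 := (hFr ω).2
      have : F ω * F ω ≤ F ω := by nlinarith
      simp only [hd]; nlinarith
    have hint2 : Integrable (fun ω => F ω - 2 * m * F ω + m ^ 2) P := by
      exact ((aux_int_1 P hFm hFr).sub ((aux_int_1 P hFm hFr).const_mul _)).add
        (integrable_const _)
    have hintd : Integrable (fun ω => d ω * d ω) P := by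
      refine (integrable_const (1:ℝ)).mono' (hdm.mul hdm).aestronglyMeasurable ?_
      refine Filter.Eventually.of_forall fun ω => ?_
      rw [Real.norm_eq_abs, abs_mul]
      exact mul_le_one₀ (hdb ω) (abs_nonneg _) (hdb ω)
    calc ∫ ω, d ω * d ω ∂P ≤ ∫ ω, (F ω - 2 * m * F ω + m ^ 2) ∂P :=
          integral_mono hintd hint2 hps
      _ = m - 2 * m * m + m ^ 2 := by
          have hs : Integrable (fun ω => F ω - 2 * m * F ω) P :=
            (aux_int_1 P hFm hFr).sub ((aux_int_1 P hFm hFr).const_mul _)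
          rw [integral_add hs (integrable_const _), integral_sub (aux_int_1 P hFm hFr)
            ((aux_int_1 P hFm hFr).const_mul _), MeasureTheory.integral_const_mul]
          simp [hm]
      _ ≤ m := by nlinarith
  have hrw : ∀ x : Fin n → Ω, (∑ j, F (x j) - n * m) = ∑ j, d (x j) := by
    intro x
    simp [hd, Finset.sum_sub_distrib, Finset.card_univ, mul_comm]
  have hintjk : ∀ j k : Fin n, Integrable (fun x : Fin n → Ω => d (x j) * d (x k))
      (Measure.pi fun _ => P) := by
    intro j k
    refine (integrable_const (1:ℝ)).mono'
      (((hdm.comp (measurable_pi_apply j))).mul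
        ((hdm.comp (measurable_pi_apply k)))).aestronglyMeasurable ?_
    refine Filter.Eventually.of_forall fun x => ?_
    rw [Real.norm_eq_abs, abs_mul]
    exact mul_le_one₀ (hdb _) (abs_nonneg _) (hdb _)
  have hexp : ∫ x : Fin n → Ω, (∑ j, F (x j) - n * m) ^ 2 ∂(Measure.pi fun _ => P)
      = ∑ j : Fin n, ∑ k : Fin n, ∫ x : Fin n → Ω, d (x j) * d (x k)
          ∂(Measure.pi fun _ => P) := by
    have : ∀ x : Fin n → Ω, (∑ j, F (x j) - n * m) ^ 2
        = ∑ j : Fin n, ∑ k : Fin n, d (x j) * d (x k) := by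
      intro x
      rw [hrw x, sq, Finset.sum_mul_sum]
    rw [integral_congr_ae (Filter.Eventually.of_forall this)]
    rw [integral_finset_sum _ (fun j _ => integrable_finset_sum _ (fun k _ => hintjk j k))]
    exact Finset.sum_congr rfl fun j _ => integral_finset_sum _ (fun k _ => hintjk j k)
  rw [hexp]
  have hterm : ∀ j k : Fin n, ∫ x : Fin n → Ω, d (x j) * d (x k) ∂(Measure.pi fun _ => P)
      = if j = k then ∫ ω, d ω * d ω ∂P else 0 := by
    intro j k
    by_cases hjk : j = k
    · subst hjk
      simp only [if_pos rfl]
      exact aux_pi_one P j (fun ω => d ω * d ω)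
    · simp only [if_neg hjk]
      rw [aux_pi_two P hjk d, hdint, mul_zero]
  calc (∑ j : Fin n, ∑ k : Fin n, ∫ x : Fin n → Ω, d (x j) * d (x k)
        ∂(Measure.pi fun _ => P))
      = ∑ j : Fin n, ∫ ω, d ω * d ω ∂P := by
        refine Finset.sum_congr rfl fun j _ => ?_
        rw [Finset.sum_eq_single j (fun k _ hk => by rw [hterm j k, if_neg (Ne.symm hk)])
          (fun h => absurd (Finset.mem_univ j) h), hterm j j, if_pos rfl]
    _ = n * ∫ ω, d ω * d ω ∂P := by simp [Finset.card_univ, mul_comm]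
    _ ≤ n * m := by
        apply mul_le_mul_of_nonneg_left hsq (Nat.cast_nonneg n)

end MV

section Cheb
variable {Ω : Type*} [MeasurableSpace Ω] (P : Measure Ω) [IsProbabilityMeasure P] {n : ℕ}
variable {F : Ω → ℝ} (hFm : Measurable F) (hFr : ∀ ω, F ω ∈ Set.Icc (0:ℝ) 1)

include hFm hFr in
lemma aux_cheb {t : ℝ} (ht : 0 < t) :
    (Measure.pi fun _ : Fin n => P)
        {y : Fin n → Ω | t ≤ |∑ j, F (y j) - n * ∫ ω, F ω ∂P|}
      ≤ ENNReal.ofReal ((n * ∫ ω, F ω ∂P) / t ^ 2) := by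
  set ν := (Measure.pi fun _ : Fin n => P) with hνdef
  haveI : IsProbabilityMeasure ν := by rw [hνdef]; infer_instance
  set X : (Fin n → Ω) → ℝ := fun y => ∑ j, F (y j) with hX
  have hXm : Measurable X := by
    apply Finset.measurable_sum
    exact fun j _ => hFm.comp (measurable_pi_apply j)
  have hXlp : MemLp X 2 ν := by
    refine MemLp.of_bound hXm.aestronglyMeasurable (n : ℝ) ?_
    refine Filter.Eventually.of_forall fun y => ?_
    rw [Real.norm_eq_abs]
    calc |∑ j, F (y j)| ≤ ∑ j : Fin n, |F (y j)| := Finset.abs_sum_le_sum_abs _ _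
      _ ≤ ∑ _j : Fin n, (1:ℝ) := Finset.sum_le_sum fun j _ => by
          rw [abs_of_nonneg (hFr _).1]; exact (hFr _).2
      _ = n := by simp
  have hEX : (∫ y, X y ∂ν) = n * ∫ ω, F ω ∂P := aux_mean P hFm hFr
  have hvar : variance X ν ≤ n * ∫ ω, F ω ∂P := by
    rw [variance_eq_integral hXm.aemeasurable]
    refine le_trans (le_of_eq (integral_congr_ae (Filter.Eventually.of_forall fun y => ?_)))
      (aux_var P hFm hFr)
    rw [hEX]
  calc ν {y : Fin n → Ω | t ≤ |∑ j, F (y j) - n * ∫ ω, F ω ∂P|}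
      = ν {y | t ≤ |X y - (∫ y, X y ∂ν)|} := by rw [hEX]
    _ ≤ ENNReal.ofReal (variance X ν / t ^ 2) :=
        ProbabilityTheory.meas_ge_le_variance_div_sq hXlp ht
    _ ≤ ENNReal.ofReal ((n * ∫ ω, F ω ∂P) / t ^ 2) := by
        apply ENNReal.ofReal_le_ofReal
        gcongr

end Cheb

set_option maxHeartbeats 1000000 in
/-- the symmetrization inequality (11) in the proof of Theorem 3 of the
paper. With `φ(p) = √n ∫₀^{√p} √(log D(v)) dv`, `D(F,1) ≥ 2`, `D` nonincreasing with finite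
entropy integral bounding the packing numbers over finitely supported probability measures,
and `P F_i > 0` for all `i`: for every `u > 0`,
`Pⁿ( sup_i Σ_j (P F_i − F_i(x_j)) / φ(P F_i) ≥ u ) ≤
  2 (Pⁿ ⊗ Pⁿ)( sup_i Σ_j (F_i(y_j) − F_i(x_j)) / φ(f̄_i(x,y)) ≥ u − √(2/log 2) )`,
where `f̄_i(x,y) = (1/(2n)) Σ_j (F_i(y_j) + F_i(x_j))`. -/
theorem stmt12 {Ω : Type*} [MeasurableSpace Ω] (P : Measure Ω) [IsProbabilityMeasure P]
    {ι : Type*} [Countable ι] (F : ι → Ω → ℝ)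
    (hmeas : ∀ i, Measurable (F i)) (hrange : ∀ i ω, F i ω ∈ Set.Icc (0:ℝ) 1)
    (hPf : ∀ i, 0 < ∫ ω, F i ω ∂P)
    (D : ℝ → ℝ) (hmono : AntitoneOn D (Set.Ioi 0)) (hD1 : ∀ v > (0:ℝ), 1 ≤ D v)
    (hD2 : 2 ≤ D 1)
    (hint : IntegrableOn (fun v => Real.sqrt (Real.log (D v))) (Set.Ioi 0))
    (hpack : ∀ v > (0:ℝ), ∀ (m : ℕ) (q : Fin m → Ω) (w : Fin m → ℝ),
      (∀ k, 0 ≤ w k) → (∑ k, w k) = 1 →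
      ∀ S : Finset ι, (∀ i ∈ S, ∀ j ∈ S, i ≠ j →
          v ^ 2 < ∑ k, w k * (F i (q k) - F j (q k)) ^ 2) →
        (S.card : ℝ) ≤ D v)
    (n : ℕ) (hn : 1 ≤ n) (u : ℝ) (hu : 0 < u) :
    Measure.pi (fun _ : Fin n => P)
      {x | u ≤ ⨆ i, (∑ j : Fin n, ((∫ ω, F i ω ∂P) - F i (x j))) /
        (Real.sqrt n *
          ∫ v in (0:ℝ)..Real.sqrt (∫ ω, F i ω ∂P), Real.sqrt (Real.log (D v)))} ≤
      2 * (Measure.prod (Measure.pi fun _ : Fin n => P) (Measure.pi fun _ : Fin n => P))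
        {p | u - Real.sqrt (2 / Real.log 2) ≤
          ⨆ i, (∑ j : Fin n, (F i (p.2 j) - F i (p.1 j))) /
            (Real.sqrt n *
              ∫ v in (0:ℝ)..Real.sqrt ((1 / (2 * (n : ℝ))) *
                  ∑ j : Fin n, (F i (p.2 j) + F i (p.1 j))),
                Real.sqrt (Real.log (D v)))} := by
  classical
  -- basic numeric facts
  have hlog2 : 0 < Real.log 2 := Real.log_pos one_lt_two
  set s2 : ℝ := Real.sqrt (Real.log 2) with hs2def
  have hs2 : 0 < s2 := Real.sqrt_pos.mpr hlog2
  set c : ℝ := Real.sqrt (2 / Real.log 2) with hcdef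
  have hc0 : 0 < c := Real.sqrt_pos.mpr (by positivity)
  have hcsq : c ^ 2 = 2 / Real.log 2 := Real.sq_sqrt (by positivity)
  have hn1 : (1:ℝ) ≤ (n:ℝ) := by exact_mod_cast hn
  have hn0 : (0:ℝ) < (n:ℝ) := lt_of_lt_of_le one_pos hn1
  have hsqn : 0 < Real.sqrt (n:ℝ) := Real.sqrt_pos.mpr hn0
  -- the entropy function
  set G : ℝ → ℝ := Gfun D with hGdef
  have hGmono : Monotone G := Gfun_mono hint
  have hGnn : ∀ t, 0 ≤ G t := fun t => Gfun_nonneg t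
  have hGlb : ∀ {t : ℝ}, 0 ≤ t → t ≤ 1 → t * s2 ≤ G t :=
    fun {t} h1 h2 => Gfun_lb hmono hD2 hint h1 h2
  have hGmeas : Measurable G := Gfun_measurable hint
  have hiv : ∀ t : ℝ, 0 ≤ t →
      (∫ v in (0:ℝ)..t, Real.sqrt (Real.log (D v))) = G t :=
    fun t ht => intervalIntegral.integral_of_le ht
  -- the mean vector
  set m : ι → ℝ := fun i => ∫ ω, F i ω ∂P with hmdef
  have hm0 : ∀ i, 0 < m i := hPf
  have hm1 : ∀ i, m i ≤ 1 := fun i => aux_m_le_one P (hmeas i) (hrange i)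
  -- the empirical sums
  set Sf : ι → (Fin n → Ω) → ℝ := fun i x => ∑ j, F i (x j) with hSfdef
  have hSfm : ∀ i, Measurable (Sf i) := by
    intro i
    exact Finset.measurable_sum _ fun j _ => (hmeas i).comp (measurable_pi_apply j)
  have hSfnn : ∀ i x, 0 ≤ Sf i x :=
    fun i x => Finset.sum_nonneg fun j _ => (hrange i _).1
  set Φ : ι → ℝ := fun i => Real.sqrt (n:ℝ) * G (Real.sqrt (m i)) with hΦdef
  have hsm1 : ∀ i, Real.sqrt (m i) ≤ 1 :=
    fun i => Real.sqrt_le_one.mpr (hm1 i)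
  have hΦlb : ∀ i, Real.sqrt (n:ℝ) * (Real.sqrt (m i) * s2) ≤ Φ i := by
    intro i
    exact mul_le_mul_of_nonneg_left (hGlb (Real.sqrt_nonneg _) (hsm1 i)) hsqn.le
  have hΦ0 : ∀ i, 0 < Φ i := by
    intro i
    refine lt_of_lt_of_le ?_ (hΦlb i)
    have : 0 < Real.sqrt (m i) := Real.sqrt_pos.mpr (hm0 i)
    positivity
  set Ψ : ι → (Fin n → Ω) → ℝ := fun i x => ((n:ℝ) * m i - Sf i x) / Φ i with hΨdef
  set bar : ι → (Fin n → Ω) × (Fin n → Ω) → ℝ :=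
    fun i p => (1/(2*(n:ℝ))) * ∑ j, (F i (p.2 j) + F i (p.1 j)) with hbardef
  have hbar_eq : ∀ i p, bar i p = (Sf i p.1 + Sf i p.2) / (2*(n:ℝ)) := by
    intro i p
    rw [hbardef, hSfdef]
    simp only [Finset.sum_add_distrib]
    ring
  have hbar_nn : ∀ i p, 0 ≤ bar i p := by
    intro i p
    rw [hbar_eq]
    have := hSfnn i p.1
    have := hSfnn i p.2
    have h2n : (0:ℝ) < 2 * (n:ℝ) := by positivity
    exact div_nonneg (by linarith) h2n.le
  have hbar_le1 : ∀ i p, bar i p ≤ 1 := by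
    intro i p
    rw [hbar_eq, div_le_one (by positivity)]
    have h1 : Sf i p.1 ≤ (n:ℝ) := by
      rw [hSfdef]
      calc (∑ j, F i (p.1 j)) ≤ ∑ _j : Fin n, (1:ℝ) :=
            Finset.sum_le_sum fun j _ => (hrange i _).2
        _ = n := by simp
    have h2 : Sf i p.2 ≤ (n:ℝ) := by
      rw [hSfdef]
      calc (∑ j, F i (p.2 j)) ≤ ∑ _j : Fin n, (1:ℝ) :=
            Finset.sum_le_sum fun j _ => (hrange i _).2
        _ = n := by simp
    linarith
  set den : ι → (Fin n → Ω) × (Fin n → Ω) → ℝ :=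
    fun i p => Real.sqrt (n:ℝ) * G (Real.sqrt (bar i p)) with hdendef
  have hden_nn : ∀ i p, 0 ≤ den i p := fun i p => by
    rw [hdendef]; exact mul_nonneg hsqn.le (hGnn _)
  set Expr : ι → (Fin n → Ω) × (Fin n → Ω) → ℝ :=
    fun i p => (Sf i p.2 - Sf i p.1) / den i p with hExprdef
  -- rewrite the goal in terms of Ψ and Expr
  have halg : ∀ r : ℝ, (Real.sqrt (n:ℝ) / s2) * (Real.sqrt (n:ℝ) * (r * s2)) = (n:ℝ) * r := by
    intro r
    have hnn : Real.sqrt (n:ℝ) * Real.sqrt (n:ℝ) = (n:ℝ) := Real.mul_self_sqrt hn0.le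
    field_simp
    linear_combination r * hnn
  have hgoalE : {x : Fin n → Ω | u ≤ ⨆ i, (∑ j : Fin n, ((∫ ω, F i ω ∂P) - F i (x j))) /
        (Real.sqrt n *
          ∫ v in (0:ℝ)..Real.sqrt (∫ ω, F i ω ∂P), Real.sqrt (Real.log (D v)))}
      = {x | u ≤ ⨆ i, Ψ i x} := by
    ext x
    simp only [Set.mem_setOf_eq]
    have : ∀ i, (∑ j : Fin n, ((∫ ω, F i ω ∂P) - F i (x j))) /
        (Real.sqrt n *
          ∫ v in (0:ℝ)..Real.sqrt (∫ ω, F i ω ∂P), Real.sqrt (Real.log (D v))) = Ψ i x := by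
      intro i
      simp only [hΨdef, hΦdef, hSfdef, hmdef]
      rw [hiv _ (Real.sqrt_nonneg _), Finset.sum_sub_distrib, Finset.sum_const,
        Finset.card_univ, Fintype.card_fin, nsmul_eq_mul]
    rw [iSup_congr this]
  have hgoalB : {p : (Fin n → Ω) × (Fin n → Ω) | u - c ≤
          ⨆ i, (∑ j : Fin n, (F i (p.2 j) - F i (p.1 j))) /
            (Real.sqrt n *
              ∫ v in (0:ℝ)..Real.sqrt ((1 / (2 * (n : ℝ))) *
                  ∑ j : Fin n, (F i (p.2 j) + F i (p.1 j))),
                Real.sqrt (Real.log (D v)))}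
      = {p | u - c ≤ ⨆ i, Expr i p} := by
    ext p
    simp only [Set.mem_setOf_eq]
    have : ∀ i, (∑ j : Fin n, (F i (p.2 j) - F i (p.1 j))) /
            (Real.sqrt n *
              ∫ v in (0:ℝ)..Real.sqrt ((1 / (2 * (n : ℝ))) *
                  ∑ j : Fin n, (F i (p.2 j) + F i (p.1 j))),
                Real.sqrt (Real.log (D v))) = Expr i p := by
      intro i
      simp only [hExprdef, hdendef, hbardef, hSfdef]
      rw [hiv _ (Real.sqrt_nonneg _), Finset.sum_sub_distrib]
    rw [iSup_congr this]
  rw [hgoalE, hgoalB]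
  set ν : Measure (Fin n → Ω) := Measure.pi (fun _ : Fin n => P) with hνdef
  haveI hνprob : IsProbabilityMeasure ν := by rw [hνdef]; infer_instance
  -- measurability
  have hΨm : ∀ i, Measurable (Ψ i) := fun i =>
    (measurable_const.sub (hSfm i)).div_const _
  have hsupΨ : Measurable fun x => ⨆ i, Ψ i x := Measurable.iSup hΨm
  have hEmeas : MeasurableSet {x : Fin n → Ω | u ≤ ⨆ i, Ψ i x} :=
    measurableSet_le measurable_const hsupΨ
  have hbarm : ∀ i, Measurable (bar i) := by
    intro i
    refine Measurable.const_mul ?_ _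
    refine Finset.measurable_sum _ fun j _ => ?_
    exact ((hmeas i).comp ((measurable_pi_apply j).comp measurable_snd)).add
      ((hmeas i).comp ((measurable_pi_apply j).comp measurable_fst))
  have hdenm : ∀ i, Measurable (den i) :=
    fun i => measurable_const.mul
      (hGmeas.comp (Real.continuous_sqrt.measurable.comp (hbarm i)))
  have hExprm : ∀ i, Measurable (Expr i) := fun i =>
    (((hSfm i).comp measurable_snd).sub ((hSfm i).comp measurable_fst)).div (hdenm i)
  have hRm : Measurable fun p => ⨆ i, Expr i p := Measurable.iSup hExprm
  have hBmeas : ∀ t : ℝ, MeasurableSet {p : (Fin n → Ω) × (Fin n → Ω) | t ≤ ⨆ i, Expr i p} :=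
    fun t => measurableSet_le measurable_const hRm
  -- trivial case: empty index type
  rcases isEmpty_or_nonempty ι with hι | hι
  · have hE0 : {x : Fin n → Ω | u ≤ ⨆ i, Ψ i x} = ∅ := by
      ext x
      simp only [Set.mem_setOf_eq, Set.mem_empty_iff_false, iff_false, not_le]
      rw [Real.iSup_of_isEmpty]
      exact hu
    rw [hE0]
    simp
  -- boundedness of the suprema
  have hm_le_sqrt : ∀ i, m i ≤ Real.sqrt (m i) := by
    intro i
    nlinarith [Real.sqrt_nonneg (m i), Real.sq_sqrt (le_of_lt (hm0 i)), hm1 i, hsm1 i]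
  have hbddΨ : ∀ x, BddAbove (Set.range fun i => Ψ i x) := by
    intro x
    refine ⟨Real.sqrt (n:ℝ) / s2, ?_⟩
    rintro _ ⟨i, rfl⟩
    rcases le_or_gt ((n:ℝ) * m i - Sf i x) 0 with hnum | hnum
    · exact le_trans (div_nonpos_of_nonpos_of_nonneg hnum (hΦ0 i).le) (by positivity)
    · show ((n:ℝ) * m i - Sf i x) / Φ i ≤ _
      rw [div_le_iff₀ (hΦ0 i)]
      calc (n:ℝ) * m i - Sf i x ≤ (n:ℝ) * m i := by linarith [hSfnn i x]
        _ ≤ (n:ℝ) * Real.sqrt (m i) :=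
            mul_le_mul_of_nonneg_left (hm_le_sqrt i) hn0.le
        _ = (Real.sqrt (n:ℝ)/s2) * (Real.sqrt (n:ℝ) * (Real.sqrt (m i) * s2)) := (halg _).symm
        _ ≤ (Real.sqrt (n:ℝ)/s2) * Φ i :=
            mul_le_mul_of_nonneg_left (hΦlb i) (by positivity)
  have hbar_le_sqrt : ∀ i p, bar i p ≤ Real.sqrt (bar i p) := by
    intro i p
    nlinarith [Real.sqrt_nonneg (bar i p), Real.sq_sqrt (hbar_nn i p),
      hbar_le1 i p, Real.sqrt_le_one.mpr (hbar_le1 i p)]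
  have hbddE : ∀ p, BddAbove (Set.range fun i => Expr i p) := by
    intro p
    refine ⟨2 * Real.sqrt (n:ℝ) / s2, ?_⟩
    rintro _ ⟨i, rfl⟩
    rcases eq_or_lt_of_le (hden_nn i p) with hd0 | hdpos
    · show (Sf i p.2 - Sf i p.1) / den i p ≤ _
      rw [← hd0, div_zero]
      positivity
    · show (Sf i p.2 - Sf i p.1) / den i p ≤ _
      rw [div_le_iff₀ hdpos]
      have hbeq : 2*(n:ℝ)*bar i p = Sf i p.1 + Sf i p.2 := by
        rw [hbar_eq]
        field_simp
      calc Sf i p.2 - Sf i p.1 ≤ 2*(n:ℝ)*bar i p := by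
            have := hSfnn i p.1; linarith [hbeq]
        _ ≤ 2*(n:ℝ)*Real.sqrt (bar i p) := by
            have := hbar_le_sqrt i p
            nlinarith [hn0]
        _ = 2*((Real.sqrt (n:ℝ)/s2) * (Real.sqrt (n:ℝ) * (Real.sqrt (bar i p) * s2))) := by
            rw [halg]; ring
        _ ≤ 2*((Real.sqrt (n:ℝ)/s2) * (Real.sqrt (n:ℝ) * G (Real.sqrt (bar i p)))) := by
            have h1 := hGlb (Real.sqrt_nonneg (bar i p)) (Real.sqrt_le_one.mpr (hbar_le1 i p))
            have h2 : (0:ℝ) ≤ Real.sqrt (n:ℝ)/s2 := div_nonneg hsqn.le hs2.le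
            nlinarith [h1, mul_nonneg h2 hsqn.le]
        _ = 2 * Real.sqrt (n:ℝ) / s2 * den i p := by
            show _ = 2 * Real.sqrt (n:ℝ) / s2 * (Real.sqrt (n:ℝ) * G (Real.sqrt (bar i p)))
            ring
  -- the Chebyshev bound
  have h2inv : ENNReal.ofReal (1/2 : ℝ) = 2⁻¹ := by
    rw [one_div, ENNReal.ofReal_inv_of_pos two_pos, ENNReal.ofReal_ofNat]
  have hΦsq : ∀ i, (n:ℝ) * m i * Real.log 2 ≤ Φ i ^ 2 := by
    intro i
    have h := hΦlb i
    have h0 : 0 ≤ Real.sqrt (n:ℝ) * (Real.sqrt (m i) * s2) := by positivity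
    have h2 := pow_le_pow_left₀ h0 h 2
    calc (n:ℝ) * m i * Real.log 2 = (Real.sqrt (n:ℝ) * (Real.sqrt (m i) * s2))^2 := by
          rw [mul_pow, mul_pow, Real.sq_sqrt hn0.le, Real.sq_sqrt (hm0 i).le,
            Real.sq_sqrt hlog2.le]
          ring
      _ ≤ Φ i ^ 2 := h2
  have hcheb : ∀ i, ν {y | c * Φ i ≤ |Sf i y - (n:ℝ) * m i|} ≤ 2⁻¹ := by
    intro i
    have hct : 0 < c * Φ i := mul_pos hc0 (hΦ0 i)
    have h1 := aux_cheb P (hmeas i) (hrange i) (n := n) hct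
    refine le_trans (le_of_eq rfl) (le_trans h1 ?_)
    rw [← h2inv]
    apply ENNReal.ofReal_le_ofReal
    have hnm : 0 < (n:ℝ) * m i := mul_pos hn0 (hm0 i)
    have hden2 : 2 * ((n:ℝ) * m i) ≤ (c * Φ i)^2 := by
      rw [mul_pow, hcsq]
      calc 2*((n:ℝ)*m i) = (2/Real.log 2) * ((n:ℝ) * m i * Real.log 2) := by
            field_simp
        _ ≤ (2/Real.log 2) * Φ i^2 :=
            mul_le_mul_of_nonneg_left (hΦsq i) (by positivity)
    calc ((n:ℝ) * m i)/(c*Φ i)^2 ≤ ((n:ℝ)*m i)/(2*((n:ℝ)*m i)) := by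
          rw [div_le_div_iff₀ (by positivity) (by positivity)]
          exact mul_le_mul_of_nonneg_left hden2 hnm.le
      _ = 1/2 := by
          rw [div_eq_div_iff (by positivity : (0:ℝ) < 2*((n:ℝ)*m i)).ne' (by norm_num : (2:ℝ) ≠ 0)]
          ring
  have hgoodc : ∀ i, (2⁻¹ : ℝ≥0∞) ≤ ν {y | |Sf i y - (n:ℝ) * m i| < c * Φ i} := by
    intro i
    have hmeasC : MeasurableSet {y : Fin n → Ω | c * Φ i ≤ |Sf i y - (n:ℝ)*m i|} :=
      measurableSet_le measurable_const ((hSfm i).sub measurable_const).abs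
    have hcompl : {y : Fin n → Ω | |Sf i y - (n:ℝ)*m i| < c * Φ i}
        = {y | c * Φ i ≤ |Sf i y - (n:ℝ)*m i|}ᶜ := by
      ext y
      simp [not_le]
    rw [hcompl, measure_compl hmeasC (measure_ne_top _ _), measure_univ]
    calc (2⁻¹:ℝ≥0∞) = 1 - 2⁻¹ := by
          rw [← ENNReal.ofReal_one, ← h2inv, ← ENNReal.ofReal_sub _ (by norm_num)]
          norm_num
      _ ≤ 1 - ν {y | c * Φ i ≤ |Sf i y - (n:ℝ)*m i|} := tsub_le_tsub_left (hcheb i) 1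
  -- deterministic core lemma
  have hkey : ∀ (ε : ℝ), 0 < ε → c + ε < u → ∀ i (x y : Fin n → Ω),
      (u - ε) * Φ i ≤ (n:ℝ) * m i - Sf i x →
      |Sf i y - (n:ℝ) * m i| < c * Φ i →
      u - c - ε ≤ Expr i (x, y) := by
    intro ε hε hcu i x y hA hs
    obtain ⟨hs1, hs2⟩ := abs_lt.mp hs
    have hΦpos := hΦ0 i
    have hucε : 0 < u - ε - c := by linarith
    have hnumlb : (u - ε - c) * Φ i ≤ Sf i y - Sf i x := by linarith [hA, hs1]
    have hnumpos : 0 < Sf i y - Sf i x :=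
      lt_of_lt_of_le (mul_pos hucε hΦpos) hnumlb
    have hbarp : bar i (x, y) ≤ m i := by
      rw [hbar_eq]
      rw [div_le_iff₀ (by positivity)]
      show Sf i x + Sf i y ≤ m i * (2 * (n:ℝ))
      linarith [hA, hs2, mul_pos hucε hΦpos]
    have hbarpos : 0 < bar i (x, y) := by
      rw [hbar_eq]
      apply div_pos ?_ (by positivity)
      show 0 < Sf i x + Sf i y
      linarith [hSfnn i x]
    have hden_le : den i (x, y) ≤ Φ i := by
      show Real.sqrt (n:ℝ) * G (Real.sqrt (bar i (x,y))) ≤ Real.sqrt (n:ℝ) * G (Real.sqrt (m i))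
      exact mul_le_mul_of_nonneg_left (hGmono (Real.sqrt_le_sqrt hbarp)) hsqn.le
    have hden_pos : 0 < den i (x, y) := by
      show 0 < Real.sqrt (n:ℝ) * G (Real.sqrt (bar i (x,y)))
      refine mul_pos hsqn (lt_of_lt_of_le ?_
        (hGlb (Real.sqrt_nonneg _) (Real.sqrt_le_one.mpr (hbar_le1 i (x,y)))))
      have hp : 0 < Real.sqrt (bar i (x,y)) := Real.sqrt_pos.mpr hbarpos
      positivity
    show u - c - ε ≤ (Sf i (x,y).2 - Sf i (x,y).1) / den i (x,y)
    rw [le_div_iff₀ hden_pos]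
    calc (u - c - ε) * den i (x,y) ≤ (u - c - ε) * Φ i :=
          mul_le_mul_of_nonneg_left hden_le (by linarith)
      _ ≤ Sf i y - Sf i x := by
          have : (u - c - ε) * Φ i = (u - ε - c) * Φ i := by ring
          rw [this]
          exact hnumlb
      _ = Sf i (x,y).2 - Sf i (x,y).1 := rfl
  rcases le_or_gt u c with hle | hgt
  · -- small u : symmetry
    obtain ⟨i₀⟩ := hι
    have hswap_bar : ∀ i (p : (Fin n → Ω) × (Fin n → Ω)), bar i (p.2, p.1) = bar i p := by
      intro i p
      show (1/(2*(n:ℝ))) * ∑ j, (F i (p.1 j) + F i (p.2 j))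
        = (1/(2*(n:ℝ))) * ∑ j, (F i (p.2 j) + F i (p.1 j))
      congr 1
      exact Finset.sum_congr rfl fun j _ => add_comm _ _
    have hswap_expr : ∀ i (p : (Fin n → Ω) × (Fin n → Ω)),
        Expr i (p.2, p.1) = - Expr i p := by
      intro i p
      show (Sf i p.1 - Sf i p.2) / (Real.sqrt (n:ℝ) * G (Real.sqrt (bar i (p.2,p.1))))
        = -((Sf i p.2 - Sf i p.1) / (Real.sqrt (n:ℝ) * G (Real.sqrt (bar i p))))
      rw [hswap_bar, ← neg_div]
      ring_nf
    set B := {p : (Fin n → Ω) × (Fin n → Ω) | u - c ≤ ⨆ i, Expr i p} with hBdef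
    have hcover : B ∪ (Prod.swap ⁻¹' B) = Set.univ := by
      ext p
      simp only [Set.mem_union, Set.mem_preimage, Set.mem_univ, iff_true, hBdef,
        Set.mem_setOf_eq]
      rcases le_or_gt 0 (Expr i₀ p) with hpos | hneg
      · left
        exact le_trans (by linarith) (le_trans hpos (le_ciSup (hbddE p) i₀))
      · right
        refine le_trans (by linarith : u - c ≤ (0:ℝ))
          (le_trans ?_ (le_ciSup (hbddE p.swap) i₀))
        show (0:ℝ) ≤ Expr i₀ (p.2, p.1)
        rw [hswap_expr i₀ p]
        linarith
    have hswap_meas : (ν.prod ν) (Prod.swap ⁻¹' B) = (ν.prod ν) B := by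
      rw [← Measure.map_apply measurable_swap (hBmeas (u - c)), Measure.prod_swap]
    have h1 : (1:ℝ≥0∞) ≤ 2 * (ν.prod ν) B := by
      calc (1:ℝ≥0∞) = (ν.prod ν) Set.univ := measure_univ.symm
        _ = (ν.prod ν) (B ∪ (Prod.swap ⁻¹' B)) := by rw [hcover]
        _ ≤ (ν.prod ν) B + (ν.prod ν) (Prod.swap ⁻¹' B) := measure_union_le _ _
        _ = 2 * (ν.prod ν) B := by rw [hswap_meas, two_mul]
    calc ν {x | u ≤ ⨆ i, Ψ i x} ≤ 1 := prob_le_one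
      _ ≤ 2 * (ν.prod ν) B := h1
  · -- large u : Fubini + Chebyshev
    have hδ0 : 0 < u - c := by linarith
    set ε : ℕ → ℝ := fun k => (u - c) / (k + 2) with hεdef
    have hε0 : ∀ k, 0 < ε k := fun k => div_pos hδ0 (by positivity)
    have hεlt : ∀ k, ε k < u - c := by
      intro k
      apply div_lt_self hδ0
      have : (0:ℝ) ≤ (k:ℝ) := Nat.cast_nonneg k
      linarith
    have hεanti : ∀ k l : ℕ, k ≤ l → ε l ≤ ε k := by
      intro k l hkl
      have hkl' : (k:ℝ) + 2 ≤ (l:ℝ) + 2 := by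
        have : (k:ℝ) ≤ (l:ℝ) := by exact_mod_cast hkl
        linarith
      exact div_le_div_of_nonneg_left hδ0.le (by positivity) hkl'
    set Sk : ℕ → Set ((Fin n → Ω) × (Fin n → Ω)) :=
      fun k => {p | u - c - ε k ≤ ⨆ i, Expr i p} with hSkdef
    have hSkmeas : ∀ k, MeasurableSet (Sk k) := fun k => hBmeas _
    have hBinter : {p : (Fin n → Ω) × (Fin n → Ω) | u - c ≤ ⨆ i, Expr i p} = ⋂ k, Sk k := by
      ext p
      simp only [Set.mem_iInter, hSkdef, Set.mem_setOf_eq]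
      constructor
      · intro h k
        linarith [hε0 k]
      · intro h
        refine le_of_forall_pos_le_add fun η hη => ?_
        obtain ⟨k, hk⟩ := exists_nat_gt ((u - c)/η)
        have hk2 : ε k < η := by
          rw [hεdef]
          rw [div_lt_iff₀ (by positivity)]
          rw [div_lt_iff₀ hη] at hk
          have : (k:ℝ) ≤ (k:ℝ) + 2 := by linarith
          nlinarith
        linarith [h k]
    have hsec : ∀ x, u ≤ (⨆ i, Ψ i x) → (2⁻¹:ℝ≥0∞) ≤ ν {y | (x, y) ∈ ⋂ k, Sk k} := by
      intro x hx
      have hseck : ∀ k, (2⁻¹:ℝ≥0∞) ≤ ν {y | (x,y) ∈ Sk k} := by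
        intro k
        have hlt : u - ε k < ⨆ i, Ψ i x := lt_of_lt_of_le (by linarith [hε0 k]) hx
        obtain ⟨i, hi⟩ := exists_lt_of_lt_ciSup hlt
        have hi' : u - ε k < ((n:ℝ) * m i - Sf i x) / Φ i := hi
        have hA : (u - ε k) * Φ i ≤ (n:ℝ) * m i - Sf i x :=
          le_of_lt ((lt_div_iff₀ (hΦ0 i)).mp hi')
        have hsub : {y : Fin n → Ω | |Sf i y - (n:ℝ)*m i| < c * Φ i}
            ⊆ {y | (x,y) ∈ Sk k} := by
          intro y hy
          have hexpr := hkey (ε k) (hε0 k) (by linarith [hεlt k]) i x y hA hy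
          show u - c - ε k ≤ ⨆ i, Expr i (x,y)
          exact le_trans hexpr (le_ciSup (hbddE (x,y)) i)
        exact le_trans (hgoodc i) (measure_mono hsub)
      have hrw : {y | (x, y) ∈ ⋂ k, Sk k} = ⋂ k, {y | (x,y) ∈ Sk k} := by
        ext y; simp
      rw [hrw]
      have hanti : Antitone fun k => {y | (x,y) ∈ Sk k} := by
        intro k l hkl y hy
        show u - c - ε k ≤ ⨆ i, Expr i (x,y)
        have h1 : u - c - ε l ≤ ⨆ i, Expr i (x,y) := hy
        linarith [hεanti k l hkl]
      rw [Antitone.measure_iInter hanti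
        (fun k => ((hSkmeas k).preimage measurable_prodMk_left).nullMeasurableSet)
        ⟨0, measure_ne_top _ _⟩]
      exact le_iInf hseck
    rw [hBinter]
    have hBmeas' : MeasurableSet (⋂ k, Sk k) := MeasurableSet.iInter hSkmeas
    rw [Measure.prod_apply hBmeas']
    have hlb : (2⁻¹:ℝ≥0∞) * ν {x | u ≤ ⨆ i, Ψ i x}
        ≤ ∫⁻ x, ν (Prod.mk x ⁻¹' ⋂ k, Sk k) ∂ν := by
      calc (2⁻¹:ℝ≥0∞) * ν {x | u ≤ ⨆ i, Ψ i x}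
          = ∫⁻ _ in {x | u ≤ ⨆ i, Ψ i x}, (2⁻¹:ℝ≥0∞) ∂ν := (setLIntegral_const _ _).symm
        _ ≤ ∫⁻ x in {x | u ≤ ⨆ i, Ψ i x}, ν (Prod.mk x ⁻¹' ⋂ k, Sk k) ∂ν := by
            refine setLIntegral_mono (measurable_measure_prodMk_left hBmeas') ?_
            intro x hx
            exact hsec x hx
        _ ≤ ∫⁻ x, ν (Prod.mk x ⁻¹' ⋂ k, Sk k) ∂ν := setLIntegral_le_lintegral _ _
    calc ν {x | u ≤ ⨆ i, Ψ i x}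
        = 2 * ((2⁻¹:ℝ≥0∞) * ν {x | u ≤ ⨆ i, Ψ i x}) := by
          rw [← mul_assoc, ENNReal.mul_inv_cancel (by norm_num) (by norm_num), one_mul]
      _ ≤ 2 * ∫⁻ x, ν (Prod.mk x ⁻¹' ⋂ k, Sk k) ∂ν := mul_le_mul_right hlb 2
end
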